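/- Let V_1 ⊆ V_2 ⊆ ⋯ ⊆ V_M be a chain of linear subspaces of ℝⁿ with dim V_m = k_m, where k_1 < k_2 < ⋯ < k_M, let P_m denote the orthogonal projection onto V_m with P_0 = 0 and k_0 = 0, let f ∈ ℝⁿ, and let ε be a random vector in ℝⁿ with E ε = 0 and E ε εᵀ = σ² Iₙ; set y = f + ε. Then for every w ∈ W_M, (1/n) E‖Σ_{m=1}^{M} w_m P_m y − f‖² = Σ_{j=1}^{M} [(1 − γ_j)² ‖(P_j − P_{j−1}) f‖²/n + (σ²/n)(k_j − k_{j−1}) γ_j²] + ‖f − P_M f‖²/n. -/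

import Mathlib

open MeasureTheory Module
open scoped RealInnerProductSpace

namespace Stmt3Aux

variable {n : ℕ}

lemma sumapp' {ι : Type*} (s : Finset ι) (v : ι → EuclideanSpace ℝ (Fin n)) (i : Fin n) :
    (∑ j ∈ s, v j) i = ∑ j ∈ s, v j i := by
  induction s using Finset.cons_induction with
  | empty => rfl
  | cons a s ha ih => rw [Finset.sum_cons, Finset.sum_cons, PiLp.add_apply, ih]

lemma coord_expand (T : EuclideanSpace ℝ (Fin n) →L[ℝ] EuclideanSpace ℝ (Fin n))
    (x : EuclideanSpace ℝ (Fin n)) (i : Fin n) :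
    T x i = ∑ j, x j * (T (EuclideanSpace.single j 1) i) := by
  have hx : x = ∑ j, x j • EuclideanSpace.single j (1:ℝ) := by
    ext i; rw [sumapp']; simp [EuclideanSpace.single_apply]
  conv_lhs => rw [hx]
  rw [map_sum, sumapp']
  simp

lemma norm_sq_coords (v : EuclideanSpace ℝ (Fin n)) : ‖v‖^2 = ∑ j, (v j)^2 := by
  rw [← real_inner_self_eq_norm_sq, PiLp.inner_apply]; simp [sq]

lemma norm_sum_sq {ι : Type*} (s : Finset ι) (v : ι → EuclideanSpace ℝ (Fin n))
    (h : ∀ i ∈ s, ∀ j ∈ s, i ≠ j → ⟪v i, v j⟫ = 0) :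
    ‖∑ i ∈ s, v i‖^2 = ∑ i ∈ s, ‖v i‖^2 := by
  rw [← real_inner_self_eq_norm_sq, sum_inner]
  refine Finset.sum_congr rfl fun i hi => ?_
  rw [inner_sum, Finset.sum_eq_single_of_mem i hi
    (fun j hj hji => h i hi j hj (Ne.symm hji)), real_inner_self_eq_norm_sq]

lemma trace_proj (U : Submodule ℝ (EuclideanSpace ℝ (Fin n))) :
    ∑ j : Fin n, ‖(Submodule.orthogonalProjection U (EuclideanSpace.single j 1) : EuclideanSpace ℝ (Fin n))‖^2
      = (finrank ℝ U : ℝ) := by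
  classical
  let o := stdOrthonormalBasis ℝ U
  have key : ∀ x : EuclideanSpace ℝ (Fin n), ‖(Submodule.orthogonalProjection U x : EuclideanSpace ℝ (Fin n))‖^2
      = ∑ i, (⟪((o i : U) : EuclideanSpace ℝ (Fin n)), x⟫)^2 := by
    intro x
    have h1 : ∀ i, ⟪(Submodule.orthogonalProjection U x : U), o i⟫ = ⟪((o i : U) : EuclideanSpace ℝ (Fin n)), x⟫ := by
      intro i
      rw [Submodule.coe_inner, ← Submodule.starProjection_apply, Submodule.inner_starProjection_left_eq_right,
        Submodule.starProjection_eq_self_iff.mpr (o i).2, real_inner_comm]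
    have h2 := o.sum_inner_mul_inner (Submodule.orthogonalProjection U x) (Submodule.orthogonalProjection U x)
    rw [real_inner_self_eq_norm_sq] at h2
    have hc : ‖(Submodule.orthogonalProjection U x : EuclideanSpace ℝ (Fin n))‖
        = ‖(Submodule.orthogonalProjection U x : U)‖ := rfl
    rw [hc, ← h2]
    refine Finset.sum_congr rfl fun i _ => ?_
    rw [real_inner_comm ((Submodule.orthogonalProjection U x : U)) (o i), h1, sq]
  calc ∑ j : Fin n, ‖(Submodule.orthogonalProjection U (EuclideanSpace.single j 1) : EuclideanSpace ℝ (Fin n))‖^2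
      = ∑ j : Fin n, ∑ i, (⟪((o i : U) : EuclideanSpace ℝ (Fin n)), EuclideanSpace.single j (1:ℝ)⟫)^2 := by
        exact Finset.sum_congr rfl fun j _ => key _
    _ = ∑ i, ∑ j : Fin n, ((((o i : U) : EuclideanSpace ℝ (Fin n))) j)^2 := by
        rw [Finset.sum_comm]
        refine Finset.sum_congr rfl fun i _ => Finset.sum_congr rfl fun j _ => ?_
        congr 1
        simp [EuclideanSpace.inner_single_right]
    _ = ∑ i : Fin (finrank ℝ U), (1:ℝ) := by
        refine Finset.sum_congr rfl fun i _ => ?_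
        rw [← norm_sq_coords]
        have := o.orthonormal.1 i
        rw [show ‖((o i : U) : EuclideanSpace ℝ (Fin n))‖ = ‖o i‖ from rfl, this]; norm_num
    _ = (finrank ℝ U : ℝ) := by simp

lemma second_moment {Ω : Type*} [MeasurableSpace Ω] (μ : Measure Ω) [IsProbabilityMeasure μ]
    (σ2 : ℝ) (ε : Ω → EuclideanSpace ℝ (Fin n))
    (hint2 : ∀ i j : Fin n, Integrable (fun ω => ε ω i * ε ω j) μ)
    (hcov : ∀ i j : Fin n, ∫ ω, ε ω i * ε ω j ∂μ = if i = j then σ2 else 0)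
    (T : EuclideanSpace ℝ (Fin n) →L[ℝ] EuclideanSpace ℝ (Fin n)) :
    (Integrable (fun ω => ‖T (ε ω)‖^2) μ) ∧
    ∫ ω, ‖T (ε ω)‖^2 ∂μ = σ2 * ∑ j, ‖T (EuclideanSpace.single j 1)‖^2 := by
  classical
  set a : Fin n → Fin n → ℝ := fun i j => T (EuclideanSpace.single j 1) i with ha
  have hpt : ∀ ω, ‖T (ε ω)‖^2
      = ∑ i, ∑ j, ∑ l, (a i j * a i l) * (ε ω j * ε ω l) := by
    intro ω
    rw [norm_sq_coords]
    refine Finset.sum_congr rfl fun i _ => ?_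
    rw [coord_expand T (ε ω) i, sq, Finset.sum_mul_sum]
    refine Finset.sum_congr rfl fun j _ => Finset.sum_congr rfl fun l _ => by ring
  have hint' : ∀ i j l : Fin n, Integrable (fun ω => (a i j * a i l) * (ε ω j * ε ω l)) μ :=
    fun i j l => (hint2 j l).const_mul _
  have hIntegrable : Integrable (fun ω => ‖T (ε ω)‖^2) μ := by
    have : Integrable (fun ω => ∑ i, ∑ j, ∑ l, (a i j * a i l) * (ε ω j * ε ω l)) μ := by
      refine integrable_finset_sum _ fun i _ => integrable_finset_sum _ fun j _ =>
        integrable_finset_sum _ fun l _ => hint' i j l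
    exact this.congr (by filter_upwards with ω using (hpt ω).symm)
  refine ⟨hIntegrable, ?_⟩
  calc ∫ ω, ‖T (ε ω)‖^2 ∂μ
      = ∫ ω, ∑ i, ∑ j, ∑ l, (a i j * a i l) * (ε ω j * ε ω l) ∂μ := by
        exact integral_congr_ae (by filter_upwards with ω using hpt ω)
    _ = ∑ i, ∑ j, ∑ l, (a i j * a i l) * ∫ ω, ε ω j * ε ω l ∂μ := by
        rw [integral_finset_sum _ fun i _ => integrable_finset_sum _ fun j _ =>
          integrable_finset_sum _ fun l _ => hint' i j l]
        refine Finset.sum_congr rfl fun i _ => ?_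
        rw [integral_finset_sum _ fun j _ => integrable_finset_sum _ fun l _ => hint' i j l]
        refine Finset.sum_congr rfl fun j _ => ?_
        rw [integral_finset_sum _ fun l _ => hint' i j l]
        exact Finset.sum_congr rfl fun l _ => integral_const_mul _ _
    _ = σ2 * ∑ j, ‖T (EuclideanSpace.single j 1)‖^2 := by
        simp_rw [hcov]
        rw [Finset.mul_sum]
        rw [Finset.sum_comm]
        refine Finset.sum_congr rfl fun j _ => ?_
        rw [norm_sq_coords, Finset.mul_sum]
        refine Finset.sum_congr rfl fun i _ => ?_
        rw [Finset.sum_eq_single j]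
        · simp [ha, sq, mul_comm]
        · intro l _ hl; simp [if_neg (Ne.symm hl)]
        · intro h; simp at h

end Stmt3Aux

open Stmt3Aux

set_option maxHeartbeats 1000000 in
theorem stmt_3 (n M : ℕ) (hn : 0 < n) (hM : 1 ≤ M) (σ2 : ℝ)
    (V : ℕ → Submodule ℝ (EuclideanSpace ℝ (Fin n)))
    (hV0 : V 0 = ⊥)
    (hchain : ∀ j, 1 ≤ j → j < M → V j ≤ V (j + 1))
    (k : ℕ → ℕ) (hk0 : k 0 = 0)
    (hdim : ∀ m, 1 ≤ m → m ≤ M → Module.finrank ℝ (V m) = k m)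
    (hkmono : ∀ m, 1 ≤ m → m < M → k m < k (m + 1))
    (f : EuclideanSpace ℝ (Fin n))
    {Ω : Type*} [MeasurableSpace Ω] (μ : Measure Ω) [IsProbabilityMeasure μ]
    (ε : Ω → EuclideanSpace ℝ (Fin n))
    (hmeas : Measurable ε)
    (hint : Integrable ε μ)
    (hmean : ∫ ω, ε ω ∂μ = 0)
    (hint2 : ∀ i j : Fin n, Integrable (fun ω => ε ω i * ε ω j) μ)
    (hcov : ∀ i j : Fin n, ∫ ω, ε ω i * ε ω j ∂μ = if i = j then σ2 else 0)
    (w : ℕ → ℝ)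
    (hw_nonneg : ∀ m ∈ Finset.Icc 1 M, 0 ≤ w m)
    (hw_sum : ∑ m ∈ Finset.Icc 1 M, w m = 1) :
    (1 / (n : ℝ)) *
        ∫ ω, ‖(∑ m ∈ Finset.Icc 1 M,
            w m • ((V m).subtypeL.comp (Submodule.orthogonalProjection (V m))) (f + ε ω)) - f‖ ^ 2 ∂μ
      = (∑ j ∈ Finset.Icc 1 M,
          ((1 - ∑ m ∈ Finset.Icc j M, w m) ^ 2 *
              ‖((V j).subtypeL.comp (Submodule.orthogonalProjection (V j))) f -
                ((V (j - 1)).subtypeL.comp (Submodule.orthogonalProjection (V (j - 1)))) f‖ ^ 2 / n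
            + (σ2 / n) * ((k j : ℝ) - (k (j - 1) : ℝ)) * (∑ m ∈ Finset.Icc j M, w m) ^ 2))
        + ‖f - ((V M).subtypeL.comp (Submodule.orthogonalProjection (V M))) f‖ ^ 2 / n := by
  classical
  set P : ℕ → EuclideanSpace ℝ (Fin n) →L[ℝ] EuclideanSpace ℝ (Fin n) :=
    fun m => (V m).subtypeL.comp (Submodule.orthogonalProjection (V m)) with hPdef
  set γ : ℕ → ℝ := fun j => ∑ m ∈ Finset.Icc j M, w m with hγdef
  set T : EuclideanSpace ℝ (Fin n) →L[ℝ] EuclideanSpace ℝ (Fin n) :=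
    ∑ m ∈ Finset.Icc 1 M, w m • P m with hTdef
  have hPapp : ∀ m x, P m x = (Submodule.orthogonalProjection (V m) x : EuclideanSpace ℝ (Fin n)) :=
    fun m x => rfl
  have hP0 : ∀ x, P 0 x = 0 := by
    intro x; rw [hPapp]
    simp [hV0]
  have hPmem : ∀ m x, P m x ∈ V m := fun m x => (Submodule.orthogonalProjection (V m) x).2
  have hPid : ∀ m x, x ∈ V m → P m x = x := fun m x hx =>
    Submodule.starProjection_eq_self_iff.mpr hx
  -- monotonicity of the chain
  have Vle : ∀ i j : ℕ, i ≤ j → j ≤ M → V i ≤ V j := by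
    have step : ∀ i, 1 ≤ i → ∀ d, i + d ≤ M → V i ≤ V (i + d) := by
      intro i hi d
      induction d with
      | zero => intro _; exact le_rfl
      | succ d ih =>
        intro h
        have h1 : i + d < M := by omega
        have := hchain (i + d) (by omega) h1
        exact le_trans (ih (by omega)) (by rw [show i + (d+1) = (i+d)+1 by ring]; exact this)
    intro i j hij hjM
    rcases Nat.eq_zero_or_pos i with h0 | h1
    · subst h0; rw [hV0]; exact bot_le
    · have := step i h1 (j - i) (by omega)
      rwa [show i + (j - i) = j by omega] at this
  -- inner product with projection, for members
  have horth : ∀ (m : ℕ) (u x : EuclideanSpace ℝ (Fin n)), u ∈ V m → ⟪u, x - P m x⟫ = 0 := by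
    intro m u x hu
    exact ((Submodule.mem_orthogonal _ _).1
      (Submodule.sub_starProjection_mem_orthogonal (K := V m) x)) u hu
  have hinner_mem : ∀ (m : ℕ) (u x : EuclideanSpace ℝ (Fin n)), u ∈ V m →
      ⟪u, P m x⟫ = ⟪u, x⟫ := by
    intro m u x hu
    have := horth m u x hu
    rw [inner_sub_right] at this
    linarith
  -- pairwise orthogonality of increments
  have hQmem : ∀ j x, 1 ≤ j → j ≤ M → P j x - P (j-1) x ∈ V j := by
    intro j x h1 h2
    exact Submodule.sub_mem _ (hPmem j x) (Vle (j-1) j (by omega) h2 (hPmem (j-1) x))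
  have hortho_pair : ∀ i j, 1 ≤ i → i < j → j ≤ M →
      ∀ x y, ⟪P i x - P (i-1) x, P j y - P (j-1) y⟫ = 0 := by
    intro i j h1 hij hjM x y
    have hmem : P i x - P (i-1) x ∈ V (j-1) :=
      Vle i (j-1) (by omega) (by omega) (hQmem i x h1 (by omega))
    rw [inner_sub_right, hinner_mem j _ y (Vle (j-1) j (by omega) hjM hmem),
      hinner_mem (j-1) _ y hmem, sub_self]
  -- telescoping
  have tele : ∀ m x, ∑ j ∈ Finset.Icc 1 m, (P j x - P (j-1) x) = P m x := by
    intro m x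
    induction m with
    | zero => simp [hP0]
    | succ m ih =>
      rw [Finset.sum_Icc_succ_top (by omega), ih]
      simp
  -- Abel summation
  have hfil1 : ∀ m ∈ Finset.Icc 1 M, (Finset.Icc 1 M).filter (fun j => j ≤ m) = Finset.Icc 1 m := by
    intro m hm
    rw [Finset.mem_Icc] at hm
    ext j; simp only [Finset.mem_filter, Finset.mem_Icc]; omega
  have hfil2 : ∀ j ∈ Finset.Icc 1 M, (Finset.Icc 1 M).filter (fun m => j ≤ m) = Finset.Icc j M := by
    intro j hj
    rw [Finset.mem_Icc] at hj
    ext m; simp only [Finset.mem_filter, Finset.mem_Icc]; omega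
  have hAbel : ∀ x, T x = ∑ j ∈ Finset.Icc 1 M, γ j • (P j x - P (j-1) x) := by
    intro x
    rw [hTdef, ContinuousLinearMap.sum_apply]
    calc ∑ m ∈ Finset.Icc 1 M, (w m • P m) x
        = ∑ m ∈ Finset.Icc 1 M, ∑ j ∈ Finset.Icc 1 m, w m • (P j x - P (j-1) x) := by
          refine Finset.sum_congr rfl fun m hm => ?_
          rw [ContinuousLinearMap.smul_apply, ← tele m x, Finset.smul_sum]
      _ = ∑ m ∈ Finset.Icc 1 M, ∑ j ∈ Finset.Icc 1 M,
            if j ≤ m then w m • (P j x - P (j-1) x) else 0 := by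
          refine Finset.sum_congr rfl fun m hm => ?_
          rw [← hfil1 m hm, Finset.sum_filter]
      _ = ∑ j ∈ Finset.Icc 1 M, γ j • (P j x - P (j-1) x) := by
          rw [Finset.sum_comm]
          refine Finset.sum_congr rfl fun j hj => ?_
          rw [← Finset.sum_filter, hfil2 j hj, ← Finset.sum_smul]
  -- decomposition of the bias term
  have hu : T f - f = (∑ j ∈ Finset.Icc 1 M, (γ j - 1) • (P j f - P (j-1) f)) + (P M f - f) := by
    rw [hAbel f]
    have h1 : ∑ j ∈ Finset.Icc 1 M, (γ j - 1) • (P j f - P (j-1) f)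
        = (∑ j ∈ Finset.Icc 1 M, γ j • (P j f - P (j-1) f))
          - ∑ j ∈ Finset.Icc 1 M, (P j f - P (j-1) f) := by
      rw [← Finset.sum_sub_distrib]
      refine Finset.sum_congr rfl fun j hj => ?_
      rw [sub_smul, one_smul]
    rw [h1, tele M f]
    abel
  -- orthogonality to the residual
  have hresid : ∀ j, 1 ≤ j → j ≤ M → ∀ x, ⟪P j x - P (j-1) x, P M f - f⟫ = 0 := by
    intro j h1 h2 x
    have hm : P j x - P (j-1) x ∈ V M := Vle j M h2 le_rfl (hQmem j x h1 h2)
    have := horth M (P j x - P (j-1) x) f hm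
    rw [show P M f - f = -(f - P M f) by abel, inner_neg_right, this, neg_zero]
  -- squared norm of the bias
  have hbias : ‖T f - f‖^2
      = (∑ j ∈ Finset.Icc 1 M, (1 - γ j)^2 * ‖P j f - P (j-1) f‖^2) + ‖f - P M f‖^2 := by
    rw [hu, norm_add_sq_real]
    have hz : ⟪∑ j ∈ Finset.Icc 1 M, (γ j - 1) • (P j f - P (j-1) f), P M f - f⟫ = 0 := by
      rw [sum_inner]
      refine Finset.sum_eq_zero fun j hj => ?_
      rw [Finset.mem_Icc] at hj
      rw [real_inner_smul_left, hresid j hj.1 hj.2 f, mul_zero]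
    have hnorm : ‖∑ j ∈ Finset.Icc 1 M, (γ j - 1) • (P j f - P (j-1) f)‖^2
        = ∑ j ∈ Finset.Icc 1 M, (1 - γ j)^2 * ‖P j f - P (j-1) f‖^2 := by
      rw [norm_sum_sq]
      · refine Finset.sum_congr rfl fun j hj => ?_
        rw [norm_smul, mul_pow, Real.norm_eq_abs, sq_abs]
        ring_nf
      · intro i hi j hj hij
        rw [Finset.mem_Icc] at hi hj
        rw [real_inner_smul_left, real_inner_smul_right]
        rcases Nat.lt_or_ge i j with h | h
        · rw [hortho_pair i j hi.1 h hj.2 f f]; ring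
        · have hji : j < i := by omega
          rw [real_inner_comm, hortho_pair j i hj.1 hji hi.2 f f]; ring
    rw [hnorm, hz, norm_sub_rev (P M f) f]
    ring
  -- variance term
  have hvarsum : ∑ j : Fin n, ‖T (EuclideanSpace.single j 1)‖^2
      = ∑ l ∈ Finset.Icc 1 M, γ l ^2 * ((k l : ℝ) - (k (l-1) : ℝ)) := by
    have hstep : ∀ x : EuclideanSpace ℝ (Fin n), ‖T x‖^2
        = ∑ l ∈ Finset.Icc 1 M, γ l ^2 * ‖P l x - P (l-1) x‖^2 := by
      intro x
      rw [hAbel x, norm_sum_sq]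
      · refine Finset.sum_congr rfl fun l hl => ?_
        rw [norm_smul, mul_pow, Real.norm_eq_abs, sq_abs]
      · intro i hi j hj hij
        rw [Finset.mem_Icc] at hi hj
        rw [real_inner_smul_left, real_inner_smul_right]
        rcases Nat.lt_or_ge i j with h | h
        · rw [hortho_pair i j hi.1 h hj.2 x x]; ring
        · have hji : j < i := by omega
          rw [real_inner_comm, hortho_pair j i hj.1 hji hi.2 x x]; ring
    have hcrossP : ∀ l, 1 ≤ l → l ≤ M → ∀ x : EuclideanSpace ℝ (Fin n),
        ‖P l x - P (l-1) x‖^2 = ‖P l x‖^2 - ‖P (l-1) x‖^2 := by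
      intro l h1 h2 x
      have hmem : P (l-1) x ∈ V l := Vle (l-1) l (by omega) h2 (hPmem (l-1) x)
      have hc : ⟪P l x, P (l-1) x⟫ = ‖P (l-1) x‖^2 := by
        rw [real_inner_comm, hinner_mem l (P (l-1) x) x hmem,
          ← hinner_mem (l-1) (P (l-1) x) x (hPmem (l-1) x), real_inner_self_eq_norm_sq]
      rw [norm_sub_sq_real, hc]
      ring
    have hfr : ∀ l, 1 ≤ l → l ≤ M →
        ∑ j : Fin n, ‖P l (EuclideanSpace.single j 1) - P (l-1) (EuclideanSpace.single j 1)‖^2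
          = (k l : ℝ) - (k (l-1) : ℝ) := by
      intro l h1 h2
      have e1 : ∑ j : Fin n, ‖P l (EuclideanSpace.single j 1)‖^2 = (k l : ℝ) := by
        have := trace_proj (V l)
        rw [hdim l h1 h2] at this
        exact this
      have e2 : ∑ j : Fin n, ‖P (l-1) (EuclideanSpace.single j 1)‖^2 = (k (l-1) : ℝ) := by
        have := trace_proj (V (l-1))
        rcases Nat.eq_zero_or_pos (l-1) with h0 | hpos
        · rw [h0]
          simp [hP0, hk0]
        · rw [hdim (l-1) hpos (by omega)] at this
          exact this
      calc ∑ j : Fin n, ‖P l (EuclideanSpace.single j 1) - P (l-1) (EuclideanSpace.single j 1)‖^2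
          = ∑ j : Fin n, (‖P l (EuclideanSpace.single j 1)‖^2
              - ‖P (l-1) (EuclideanSpace.single j 1)‖^2) :=
            Finset.sum_congr rfl fun j _ => hcrossP l h1 h2 _
        _ = (k l : ℝ) - (k (l-1) : ℝ) := by rw [Finset.sum_sub_distrib, e1, e2]
    calc ∑ j : Fin n, ‖T (EuclideanSpace.single j 1)‖^2
        = ∑ j : Fin n, ∑ l ∈ Finset.Icc 1 M,
            γ l ^2 * ‖P l (EuclideanSpace.single j 1) - P (l-1) (EuclideanSpace.single j 1)‖^2 :=
          Finset.sum_congr rfl fun j _ => hstep _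
      _ = ∑ l ∈ Finset.Icc 1 M, γ l ^2 *
            ∑ j : Fin n, ‖P l (EuclideanSpace.single j 1) - P (l-1) (EuclideanSpace.single j 1)‖^2 := by
          rw [Finset.sum_comm]
          exact Finset.sum_congr rfl fun l _ => (Finset.mul_sum _ _ _).symm
      _ = ∑ l ∈ Finset.Icc 1 M, γ l ^2 * ((k l : ℝ) - (k (l-1) : ℝ)) := by
          refine Finset.sum_congr rfl fun l hl => ?_
          rw [Finset.mem_Icc] at hl
          rw [hfr l hl.1 hl.2]
  -- rewrite the integrand
  have hTf : ∀ ω, (∑ m ∈ Finset.Icc 1 M, w m • P m (f + ε ω)) - f = (T f - f) + T (ε ω) := by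
    intro ω
    have : T (f + ε ω) = ∑ m ∈ Finset.Icc 1 M, w m • P m (f + ε ω) := by
      rw [hTdef, ContinuousLinearMap.sum_apply]
      exact Finset.sum_congr rfl fun m _ => rfl
    rw [← this, map_add]
    abel
  -- integral computation
  obtain ⟨hint_sq, hval⟩ := second_moment μ σ2 ε hint2 hcov T
  have hcross_int : Integrable (fun ω => ⟪T f - f, T (ε ω)⟫) μ := by
    have := (((innerSL ℝ (T f - f)).comp T).integrable_comp hint)
    exact this.congr (by filter_upwards with ω using rfl)
  have hcross_val : ∫ ω, ⟪T f - f, T (ε ω)⟫ ∂μ = 0 := by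
    have h := ContinuousLinearMap.integral_comp_comm ((innerSL ℝ (T f - f)).comp T) hint
    rw [hmean, map_zero] at h
    simpa only [ContinuousLinearMap.comp_apply, innerSL_apply_apply] using h
  have hmain : ∫ ω, ‖(∑ m ∈ Finset.Icc 1 M, w m • P m (f + ε ω)) - f‖^2 ∂μ
      = ‖T f - f‖^2 + σ2 * ∑ j : Fin n, ‖T (EuclideanSpace.single j 1)‖^2 := by
    calc ∫ ω, ‖(∑ m ∈ Finset.Icc 1 M, w m • P m (f + ε ω)) - f‖^2 ∂μ
        = ∫ ω, (‖T f - f‖^2 + (2 * ⟪T f - f, T (ε ω)⟫ + ‖T (ε ω)‖^2)) ∂μ := by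
          refine integral_congr_ae ?_
          filter_upwards with ω
          rw [hTf ω, norm_add_sq_real]
          ring
      _ = ‖T f - f‖^2 + (2 * ∫ ω, ⟪T f - f, T (ε ω)⟫ ∂μ + ∫ ω, ‖T (ε ω)‖^2 ∂μ) := by
          have hAdd1 : ∫ ω, (‖T f - f‖^2 + (2 * ⟪T f - f, T (ε ω)⟫ + ‖T (ε ω)‖^2)) ∂μ
              = ∫ _ω, ‖T f - f‖^2 ∂μ
                + ∫ ω, (2 * ⟪T f - f, T (ε ω)⟫ + ‖T (ε ω)‖^2) ∂μ :=
            integral_add (integrable_const _) ((hcross_int.const_mul 2).add hint_sq)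
          have hAdd2 : ∫ ω, (2 * ⟪T f - f, T (ε ω)⟫ + ‖T (ε ω)‖^2) ∂μ
              = ∫ ω, 2 * ⟪T f - f, T (ε ω)⟫ ∂μ + ∫ ω, ‖T (ε ω)‖^2 ∂μ :=
            integral_add (hcross_int.const_mul 2) hint_sq
          rw [hAdd1, hAdd2, integral_const, integral_const_mul]
          simp
      _ = ‖T f - f‖^2 + σ2 * ∑ j : Fin n, ‖T (EuclideanSpace.single j 1)‖^2 := by
          rw [hcross_val, hval]
          ring
  -- final assembly
  rw [hmain, hbias, hvarsum]
  simp only [hPdef, hγdef]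
  rw [Finset.sum_add_distrib]
  have h1 : (1:ℝ)/n * ∑ j ∈ Finset.Icc 1 M, (1 - ∑ m ∈ Finset.Icc j M, w m) ^ 2 *
        ‖((V j).subtypeL.comp (Submodule.orthogonalProjection (V j))) f -
          ((V (j - 1)).subtypeL.comp (Submodule.orthogonalProjection (V (j - 1)))) f‖ ^ 2
      = ∑ j ∈ Finset.Icc 1 M, (1 - ∑ m ∈ Finset.Icc j M, w m) ^ 2 *
        ‖((V j).subtypeL.comp (Submodule.orthogonalProjection (V j))) f -
          ((V (j - 1)).subtypeL.comp (Submodule.orthogonalProjection (V (j - 1)))) f‖ ^ 2 / n := by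
    rw [Finset.mul_sum]
    exact Finset.sum_congr rfl fun j _ => by ring
  have h2 : (1:ℝ)/n * (σ2 * ∑ j ∈ Finset.Icc 1 M,
        (∑ m ∈ Finset.Icc j M, w m) ^ 2 * ((k j : ℝ) - (k (j - 1) : ℝ)))
      = ∑ j ∈ Finset.Icc 1 M, σ2 / n * ((k j : ℝ) - (k (j - 1) : ℝ)) *
          (∑ m ∈ Finset.Icc j M, w m) ^ 2 := by
    rw [Finset.mul_sum, Finset.mul_sum]
    exact Finset.sum_congr rfl fun j _ => by ring
  rw [mul_add, mul_add, h1, h2]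
  ring
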